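/- Order preservation can fail when Q(S₀, I₀, T) ≠ 0: there exist constants 0 < β_q < β_n, γ > 0, T > 0, initial data S₀, I₀ ∈ (0,1) with S₀ + I₀ ≤ 1, such that with τ = [0,T], (S, I) solving the SIR system with transmission rate β^τ and initial data (S₀, I₀), and (S^δ, I^δ) solving it with initial data (S₀, I₀ − δ), one has R^δ(∞) > R(∞) for all sufficiently small δ > 0, where R = 1 − S − I and R^δ = 1 − S^δ − I^δ. -/

import Mathlib

open Set Filter MeasureTheory Topology Asymptotics
open scoped Classical

noncomputable section

/-- The transmission rate: `βq` on the quarantine set `τ`, `βn` elsewhere. -/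
def betaFun (βq βn : ℝ) (τ : Set ℝ) : ℝ → ℝ := fun t => if t ∈ τ then βq else βn

/-- `(S, I)` solves the SIR system `S' = -β S I`, `I' = β S I - γ I` on `[0, ∞)`,
in integrated form. -/
def IsSIR (β : ℝ → ℝ) (γ : ℝ) (S I : ℝ → ℝ) : Prop :=
  ContinuousOn S (Ici 0) ∧ ContinuousOn I (Ici 0) ∧
    ∀ t ∈ Ici (0 : ℝ),
      (S t = S 0 - ∫ s in (0 : ℝ)..t, β s * S s * I s) ∧
      (I t = I 0 + ∫ s in (0 : ℝ)..t, (β s * S s * I s - γ * I s))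

/-- `(S, I, R)` solves the full SIR system `S' = -β S I`, `I' = β S I - γ I`,
`R' = γ I` on `[0, ∞)`, in integrated form. -/
def IsSIRFull (β : ℝ → ℝ) (γ : ℝ) (S I R : ℝ → ℝ) : Prop :=
  IsSIR β γ S I ∧ ∀ t ∈ Ici (0 : ℝ), R t = R 0 + ∫ s in (0 : ℝ)..t, γ * I s

/-- `τ` belongs to the class `𝒯`: a finite union of closed intervals contained in
`[0, ∞)` with total length `T`. -/
def MemTau (T : ℝ) (τ : Set ℝ) : Prop :=
  τ ⊆ Ici 0 ∧
    (∃ (n : ℕ) (a b : Fin n → ℝ), (∀ i, a i ≤ b i) ∧ τ = ⋃ i, Icc (a i) (b i)) ∧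
    volume τ = ENNReal.ofReal T

/-- FTC helper: right derivative of a primitive of a function continuous on `Ici 0`. -/
lemma primitive_hasDerivWithinAt {g : ℝ → ℝ} {a t : ℝ} (hg : ContinuousOn g (Ici 0))
    (h0 : 0 ≤ a) (hat : a ≤ t) :
    HasDerivWithinAt (fun u => ∫ s in a..u, g s) (g t) (Ici t) t := by
  have h0t : (0:ℝ) ≤ t := le_trans h0 hat
  have hint : IntervalIntegrable g volume a t :=
    (hg.mono (by intro z hz; rw [uIcc_of_le hat] at hz; exact le_trans h0 hz.1)).intervalIntegrable
  have hmeas : StronglyMeasurableAtFilter g (𝓝[>] t) volume := by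
    obtain ⟨s, hs, hmeas⟩ :=
      hg.stronglyMeasurableAtFilter_nhdsWithin measurableSet_Ici (t : ℝ)
    exact ⟨s, nhdsWithin_mono t (fun z hz => le_trans h0t (le_of_lt hz)) hs, hmeas⟩
  have hb : ContinuousWithinAt g (Ioi t) t :=
    (hg t h0t).mono (fun z hz => le_trans h0t (le_of_lt hz))
  exact intervalIntegral.integral_hasDerivWithinAt_right hint hmeas hb

/-- Continuity of a primitive. -/
lemma primitive_continuousOn {g : ℝ → ℝ} {a x : ℝ} (hg : ContinuousOn g (Ici 0))
    (h0 : 0 ≤ a) (hax : a ≤ x) :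
    ContinuousOn (fun u => ∫ s in a..u, g s) (Icc a x) := by
  have : ContinuousOn (fun u => ∫ s in a..u, g s) (uIcc a x) := by
    apply intervalIntegral.continuousOn_primitive_interval
    rw [uIcc_of_le hax]
    exact (hg.mono (fun z hz => le_trans h0 hz.1)).integrableOn_compact isCompact_Icc
  rwa [uIcc_of_le hax] at this

/-- Exponential representation: if `f t = f a + ∫_a^t g f`, then `f t = f a * exp (∫_a^t g)`. -/
lemma exp_rep {f g : ℝ → ℝ} {a x : ℝ} (h0 : 0 ≤ a) (hax : a ≤ x)
    (hf : ContinuousOn f (Ici 0)) (hg : ContinuousOn g (Ici 0))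
    (heq : ∀ t ∈ Icc a x, f t = f a + ∫ s in a..t, g s * f s) :
    ∀ t ∈ Icc a x, f t = f a * Real.exp (∫ s in a..t, g s) := by
  set G : ℝ → ℝ := fun u => ∫ s in a..u, g s with hG
  set φ : ℝ → ℝ := fun u => f u * Real.exp (-G u) with hφ
  have hgf : ContinuousOn (fun s => g s * f s) (Ici 0) := hg.mul hf
  have hφcont : ContinuousOn φ (Icc a x) := by
    have h1 : ContinuousOn f (Icc a x) := hf.mono (fun z hz => le_trans h0 hz.1)
    have h2 : ContinuousOn G (Icc a x) := primitive_continuousOn hg h0 hax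
    exact h1.mul (h2.neg.rexp)
  have hderiv : ∀ t ∈ Ico a x, HasDerivWithinAt φ 0 (Ici t) t := by
    intro t ht
    have hat : a ≤ t := ht.1
    have hGd : HasDerivWithinAt G (g t) (Ici t) t := primitive_hasDerivWithinAt hg h0 hat
    have hFd : HasDerivWithinAt (fun u => f a + ∫ s in a..u, g s * f s)
        (g t * f t) (Ici t) t :=
      (primitive_hasDerivWithinAt hgf h0 hat).const_add (f a)
    have hmem : Icc a x ∈ 𝓝[Ici t] t := by
      apply mem_nhdsWithin.mpr
      exact ⟨Iio x, isOpen_Iio, ht.2, fun y hy => ⟨le_trans hat hy.2, le_of_lt hy.1⟩⟩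
    have hEq : (fun u => f a + ∫ s in a..u, g s * f s) =ᶠ[𝓝[Ici t] t] f := by
      filter_upwards [hmem] with y hy
      exact (heq y hy).symm
    have hfd : HasDerivWithinAt f (g t * f t) (Ici t) t :=
      hFd.congr_of_eventuallyEq hEq.symm (heq t ⟨ht.1, le_of_lt ht.2⟩)
    have hed : HasDerivWithinAt (fun u => Real.exp (-G u)) (Real.exp (-G t) * (-g t))
        (Ici t) t := hGd.neg.exp
    have := hfd.mul hed
    have hz : g t * f t * Real.exp (-G t) + f t * (Real.exp (-G t) * -g t) = 0 := by ring
    rwa [hz] at this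
  have hconst := constant_of_has_deriv_right_zero hφcont hderiv
  intro t ht
  have h1 : φ t = φ a := hconst t ht
  have h2 : G a = 0 := intervalIntegral.integral_same
  have h3 : φ a = f a := by simp [hφ, h2]
  have h4 : f t * Real.exp (-G t) = f a := by rw [← h3, ← h1]
  have h5 := congrArg (fun z => z * Real.exp (G t)) h4
  simp only [mul_assoc, ← Real.exp_add, neg_add_cancel, Real.exp_zero, mul_one] at h5
  exact h5

local notation "B" => betaFun 4 12 (Icc (0:ℝ) 2)

lemma contInt {f : ℝ → ℝ} (hf : ContinuousOn f (Ici 0)) {a t : ℝ} (h0 : 0 ≤ a) (h0t : 0 ≤ t) :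
    IntervalIntegrable f volume a t :=
  (hf.mono (fun z hz => le_trans (le_min h0 h0t) hz.1)).intervalIntegrable

section sol

variable {S I : ℝ → ℝ} (h : IsSIR B 1 S I)

/-- integrability of the transmission integrand -/
lemma intSI (h : IsSIR B 1 S I) {t : ℝ} (ht : 0 ≤ t) :
    IntervalIntegrable (fun s => B s * S s * I s) volume 0 t := by
  have hSI : ContinuousOn (fun s => S s * I s) (Ici 0) := h.1.mul h.2.1
  have key : ∀ c x y : ℝ, 0 ≤ x → x ≤ y →
      (∀ s ∈ Ioc x y, B s = c) → IntervalIntegrable (fun s => B s * S s * I s) volume x y := by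
    intro c x y hx hxy hB
    rw [intervalIntegrable_iff_integrableOn_Ioc_of_le hxy]
    have hcont : IntegrableOn (fun s => c * (S s * I s)) (Ioc x y) := by
      apply IntegrableOn.mono_set (t := Icc x y) _ Ioc_subset_Icc_self
      exact (((hSI.mono (fun z hz => le_trans hx hz.1)).const_smul c).integrableOn_compact
        isCompact_Icc)
    exact hcont.congr_fun (fun s hs => by rw [hB s hs]; ring) measurableSet_Ioc
  rcases le_or_gt t 2 with h2 | h2
  · exact key 4 0 t le_rfl ht (fun s hs => if_pos ⟨hs.1.le, le_trans hs.2 h2⟩)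
  · exact (key 4 0 2 le_rfl (by norm_num) (fun s hs => if_pos ⟨hs.1.le, hs.2⟩)).trans
      (key 12 2 t (by norm_num) h2.le
        (fun s hs => if_neg (fun hc => absurd hc.2 (not_le.mpr hs.1))))

lemma conservation (h : IsSIR B 1 S I) : ∀ t ∈ Ici (0:ℝ),
    S t + I t = S 0 + I 0 - ∫ s in (0:ℝ)..t, I s := by
  intro t ht
  obtain ⟨e1, e2⟩ := h.2.2 t ht
  have hIint : IntervalIntegrable I volume 0 t := contInt h.2.1 le_rfl ht
  have hBint := intSI h ht
  rw [e1, e2, intervalIntegral.integral_sub hBint (hIint.const_mul 1)]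
  have : ∫ s in (0:ℝ)..t, 1 * I s = ∫ s in (0:ℝ)..t, I s := by
    simp
  rw [this]; ring

lemma eq_phase1 (h : IsSIR B 1 S I) : ∀ t ∈ Icc (0:ℝ) 2,
    (S t = S 0 + ∫ s in (0:ℝ)..t, (-(4 * I s)) * S s) ∧
    (I t = I 0 + ∫ s in (0:ℝ)..t, (4 * S s - 1) * I s) := by
  intro t ht
  obtain ⟨e1, e2⟩ := h.2.2 t ht.1
  have hBeq : ∀ s ∈ uIcc (0:ℝ) t, B s = 4 := by
    intro s hs
    rw [uIcc_of_le ht.1] at hs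
    exact if_pos ⟨hs.1, le_trans hs.2 ht.2⟩
  constructor
  · rw [e1, sub_eq_add_neg, ← intervalIntegral.integral_neg]
    congr 1
    apply intervalIntegral.integral_congr
    intro s hs
    show -(B s * S s * I s) = (-(4 * I s)) * S s
    rw [hBeq s hs]; ring
  · rw [e2]
    congr 1
    apply intervalIntegral.integral_congr
    intro s hs
    show B s * S s * I s - 1 * I s = (4 * S s - 1) * I s
    rw [hBeq s hs]; ring

lemma eq_phase2 (h : IsSIR B 1 S I) : ∀ t ∈ Ici (2:ℝ),
    (S t = S 2 + ∫ s in (2:ℝ)..t, (-(12 * I s)) * S s) ∧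
    (I t = I 2 + ∫ s in (2:ℝ)..t, (12 * S s - 1) * I s) := by
  intro t ht
  have h0t : (0:ℝ) ≤ t := le_trans (by norm_num) ht
  obtain ⟨e1, e2⟩ := h.2.2 t (le_trans (by norm_num : (0:ℝ) ≤ 2) ht)
  obtain ⟨f1, f2⟩ := h.2.2 2 (by norm_num)
  have hIt : IntervalIntegrable I volume 0 t := contInt h.2.1 le_rfl h0t
  have hI2 : IntervalIntegrable I volume 0 2 := contInt h.2.1 le_rfl (by norm_num)
  have hBt := intSI h h0t
  have hB2 := intSI h (show (0:ℝ) ≤ 2 by norm_num)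
  have hsub := intervalIntegral.integral_interval_sub_left hBt hB2
  have hBeq : ∀ᵐ s ∂volume, s ∈ Set.uIoc (2:ℝ) t → B s * S s * I s = (12 * I s) * S s := by
    apply Filter.Eventually.of_forall
    intro s hs
    rw [uIoc_of_le ht] at hs
    have : B s = 12 := if_neg (fun hc => absurd hc.2 (not_le.mpr hs.1))
    rw [this]; ring
  have hBeq2 : ∀ᵐ s ∂volume, s ∈ Set.uIoc (2:ℝ) t →
      B s * S s * I s - 1 * I s = (12 * S s - 1) * I s := by
    apply Filter.Eventually.of_forall
    intro s hs
    rw [uIoc_of_le ht] at hs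
    have : B s = 12 := if_neg (fun hc => absurd hc.2 (not_le.mpr hs.1))
    rw [this]; ring
  constructor
  · have : S t - S 2 = -(∫ s in (2:ℝ)..t, B s * S s * I s) := by
      rw [e1, f1]; rw [← hsub]; ring
    rw [intervalIntegral.integral_congr_ae hBeq] at this
    rw [← intervalIntegral.integral_neg] at this
    have h2 : (∫ s in (2:ℝ)..t, -((12 * I s) * S s)) = ∫ s in (2:ℝ)..t, (-(12 * I s)) * S s := by
      apply intervalIntegral.integral_congr; intro s _; ring
    linarith [h2 ▸ this]
  · have hsub2 := intervalIntegral.integral_interval_sub_left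
      (hBt.sub (hIt.const_mul 1)) (hB2.sub (hI2.const_mul 1))
    have : I t - I 2 = ∫ s in (2:ℝ)..t, (B s * S s * I s - 1 * I s) := by
      rw [e2, f2, ← hsub2]; ring
    rw [intervalIntegral.integral_congr_ae hBeq2] at this
    linarith [this]

end sol

section sol2

variable {S I : ℝ → ℝ}

lemma Srep1 (h : IsSIR B 1 S I) : ∀ t ∈ Icc (0:ℝ) 2,
    S t = S 0 * Real.exp (-(4 * ∫ s in (0:ℝ)..t, I s)) := by
  intro t ht
  have hg : ContinuousOn (fun s => -(4 * I s)) (Ici 0) := (h.2.1.const_smul (4:ℝ)).neg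
  have := exp_rep le_rfl (by norm_num : (0:ℝ) ≤ 2) h.1 hg
    (fun t ht => (eq_phase1 h t ht).1) t ht
  rw [this]
  congr 1
  rw [intervalIntegral.integral_neg, intervalIntegral.integral_const_mul]

lemma Irep1 (h : IsSIR B 1 S I) : ∀ t ∈ Icc (0:ℝ) 2,
    I t = I 0 * Real.exp (∫ s in (0:ℝ)..t, (4 * S s - 1)) := by
  intro t ht
  have hg : ContinuousOn (fun s => 4 * S s - 1) (Ici 0) :=
    (h.1.const_smul (4:ℝ)).sub continuousOn_const
  exact exp_rep le_rfl (by norm_num : (0:ℝ) ≤ 2) h.2.1 hg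
    (fun t ht => (eq_phase1 h t ht).2) t ht

lemma Srep2 (h : IsSIR B 1 S I) : ∀ t ∈ Ici (2:ℝ),
    S t = S 2 * Real.exp (-(12 * ∫ s in (2:ℝ)..t, I s)) := by
  intro t ht
  have hg : ContinuousOn (fun s => -(12 * I s)) (Ici 0) := (h.2.1.const_smul (12:ℝ)).neg
  have := exp_rep (by norm_num : (0:ℝ) ≤ 2) ht h.1 hg
    (fun u hu => (eq_phase2 h u hu.1).1) t ⟨ht, le_rfl⟩
  rw [this]
  congr 1
  rw [intervalIntegral.integral_neg, intervalIntegral.integral_const_mul]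

lemma Irep2 (h : IsSIR B 1 S I) : ∀ t ∈ Ici (2:ℝ),
    I t = I 2 * Real.exp (∫ s in (2:ℝ)..t, (12 * S s - 1)) := by
  intro t ht
  have hg : ContinuousOn (fun s => 12 * S s - 1) (Ici 0) :=
    (h.1.const_smul (12:ℝ)).sub continuousOn_const
  exact exp_rep (by norm_num : (0:ℝ) ≤ 2) ht h.2.1 hg
    (fun u hu => (eq_phase2 h u hu.1).2) t ⟨ht, le_rfl⟩

lemma Spos (h : IsSIR B 1 S I) (hS0 : 0 < S 0) : ∀ t ∈ Ici (0:ℝ), 0 < S t := by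
  intro t ht
  rcases le_or_gt t 2 with h2 | h2
  · rw [Srep1 h t ⟨ht, h2⟩]; positivity
  · have hS2 : 0 < S 2 := by
      rw [Srep1 h 2 ⟨by norm_num, le_rfl⟩]; positivity
    rw [Srep2 h t h2.le]; positivity

lemma Ipos (h : IsSIR B 1 S I) (hI0 : 0 < I 0) : ∀ t ∈ Ici (0:ℝ), 0 < I t := by
  intro t ht
  rcases le_or_gt t 2 with h2 | h2
  · rw [Irep1 h t ⟨ht, h2⟩]; positivity
  · have hI2 : 0 < I 2 := by
      rw [Irep1 h 2 ⟨by norm_num, le_rfl⟩]; positivity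
    rw [Irep2 h t h2.le]; positivity

lemma Iint_nonneg (h : IsSIR B 1 S I) (hI0 : 0 < I 0) {a t : ℝ} (h0 : 0 ≤ a) (hat : a ≤ t) :
    0 ≤ ∫ s in a..t, I s :=
  intervalIntegral.integral_nonneg hat
    (fun s hs => (Ipos h hI0 s (le_trans h0 hs.1)).le)

lemma Sle (h : IsSIR B 1 S I) (hS0 : S 0 = 1/2) (hI0 : 0 < I 0) :
    ∀ t ∈ Icc (0:ℝ) 2, S t ≤ 1/2 := by
  intro t ht
  rw [Srep1 h t ht, hS0]
  have h1 : Real.exp (-(4 * ∫ s in (0:ℝ)..t, I s)) ≤ 1 := by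
    rw [Real.exp_le_one_iff]
    have := Iint_nonneg h hI0 le_rfl ht.1
    linarith
  nlinarith [h1]

end sol2

section sol3

variable {S I : ℝ → ℝ}

lemma exp2le : Real.exp 2 ≤ 7.5 := by
  have h := Real.exp_one_lt_d9
  have : Real.exp 2 = Real.exp 1 * Real.exp 1 := by
    rw [← Real.exp_add]; norm_num
  nlinarith [Real.exp_pos 1]

lemma Ile (h : IsSIR B 1 S I) (hS0 : S 0 = 1/2) (hI0 : 0 < I 0) :
    ∀ t ∈ Icc (0:ℝ) 2, I t ≤ I 0 * Real.exp 2 := by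
  intro t ht
  rw [Irep1 h t ht]
  have hint : (∫ s in (0:ℝ)..t, (4 * S s - 1)) ≤ 2 := by
    have h1 : (∫ s in (0:ℝ)..t, (4 * S s - 1)) ≤ ∫ s in (0:ℝ)..t, (1:ℝ) := by
      apply intervalIntegral.integral_mono_on ht.1
      · exact (((h.1.const_smul (4:ℝ)).sub continuousOn_const).mono
          (fun z hz => le_trans (le_min le_rfl ht.1) hz.1)).intervalIntegrable
      · exact intervalIntegrable_const
      · intro s hs
        have := Sle h hS0 hI0 s ⟨hs.1, le_trans hs.2 ht.2⟩
        linarith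
    simpa using le_trans h1 (by simp [ht.2])
  have := Real.exp_le_exp.mpr hint
  nlinarith [this, hI0]

lemma IintLe (h : IsSIR B 1 S I) (hS0 : S 0 = 1/2) (hI0 : 0 < I 0) :
    ∀ t ∈ Icc (0:ℝ) 2, (∫ s in (0:ℝ)..t, I s) ≤ I 0 * Real.exp 2 * 2 := by
  intro t ht
  have h1 : (∫ s in (0:ℝ)..t, I s) ≤ ∫ s in (0:ℝ)..t, I 0 * Real.exp 2 := by
    apply intervalIntegral.integral_mono_on ht.1
    · exact contInt h.2.1 le_rfl ht.1
    · exact intervalIntegrable_const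
    · intro s hs
      exact Ile h hS0 hI0 s ⟨hs.1, le_trans hs.2 ht.2⟩
  have h2 : (∫ s in (0:ℝ)..t, I 0 * Real.exp 2) = I 0 * Real.exp 2 * t := by
    simp; ring
  rw [h2] at h1
  refine le_trans h1 ?_
  have : 0 ≤ I 0 * Real.exp 2 := by positivity
  nlinarith [ht.2]

lemma Sge (h : IsSIR B 1 S I) (hS0 : S 0 = 1/2) (hI0p : 0 < I 0) (hI0le : I 0 ≤ 1/200) :
    ∀ t ∈ Icc (0:ℝ) 2, 1/4 ≤ S t := by
  intro t ht
  rw [Srep1 h t ht, hS0]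
  have hIle : (∫ s in (0:ℝ)..t, I s) ≤ (1/200) * 7.5 * 2 := by
    refine le_trans (IintLe h hS0 hI0p t ht) ?_
    have := exp2le
    have := Real.exp_pos 2
    nlinarith
  have hlog : -(4 * ∫ s in (0:ℝ)..t, I s) ≥ -Real.log 2 := by
    have hl2 := Real.log_two_gt_d9
    nlinarith
  have : Real.exp (-(4 * ∫ s in (0:ℝ)..t, I s)) ≥ Real.exp (-Real.log 2) :=
    Real.exp_le_exp.mpr hlog
  have he : Real.exp (-Real.log 2) = 1/2 := by
    rw [Real.exp_neg, Real.exp_log] <;> norm_num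
  rw [he] at this
  linarith

lemma logS1 (h : IsSIR B 1 S I) (hS0pos : 0 < S 0) : ∀ t ∈ Icc (0:ℝ) 2,
    Real.log (S t) = Real.log (S 0) - 4 * ∫ s in (0:ℝ)..t, I s := by
  intro t ht
  rw [Srep1 h t ht, Real.log_mul (ne_of_gt hS0pos) (Real.exp_ne_zero _), Real.log_exp]
  ring

lemma logS2 (h : IsSIR B 1 S I) (hS0pos : 0 < S 0) : ∀ t ∈ Ici (2:ℝ),
    Real.log (S t) = Real.log (S 2) - 12 * ∫ s in (2:ℝ)..t, I s := by
  intro t ht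
  have hS2 : 0 < S 2 := Spos h hS0pos 2 (by norm_num)
  rw [Srep2 h t ht, Real.log_mul (ne_of_gt hS2) (Real.exp_ne_zero _), Real.log_exp]
  ring

end sol3

lemma per_solution (S I : ℝ → ℝ) (h : IsSIR B 1 S I)
    (hS0 : S 0 = 1/2) (c : ℝ) (hc : 0 < c) (hc2 : c ≤ 1/200) (hI0 : I 0 = c)
    (L : ℝ) (hL : Tendsto (fun t => 1 - S t - I t) atTop (𝓝 L)) :
    ∃ Sinf : ℝ, 0 < Sinf ∧ Sinf < 1/12 ∧ L = 1 - Sinf ∧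
      Sinf - (1/12) * Real.log Sinf
        = 1/2 + c - (1/12) * Real.log (1/2) - (2/3) * ∫ s in (0:ℝ)..2, I s := by
  have hS0pos : 0 < S 0 := by rw [hS0]; norm_num
  have hI0pos : 0 < I 0 := by rw [hI0]; exact hc
  set ℓ : ℝ := L - 1 + (S 0 + I 0) with hℓ
  have lli : Tendsto (fun t => ∫ s in (0:ℝ)..t, I s) atTop (𝓝 ℓ) := by
    have hev : (fun t => (1 - S t - I t) - 1 + (S 0 + I 0))
        =ᶠ[atTop] (fun t => ∫ s in (0:ℝ)..t, I s) := by
      filter_upwards [eventually_ge_atTop (0:ℝ)] with t ht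
      have := conservation h t ht
      linarith
    exact Tendsto.congr' hev ((hL.sub_const 1).add_const _)
  have hIle : ∀ t, 0 ≤ t → (∫ s in (0:ℝ)..t, I s) ≤ ℓ := by
    intro t ht
    apply ge_of_tendsto lli
    filter_upwards [eventually_ge_atTop t] with u hu
    have hsub := intervalIntegral.integral_interval_sub_left
      (contInt h.2.1 le_rfl (le_trans ht hu)) (contInt h.2.1 le_rfl ht)
    have h0 : 0 ≤ ∫ s in t..u, I s := Iint_nonneg h hI0pos ht hu
    linarith
  have hl0 : 0 ≤ ℓ := by
    have := hIle 0 le_rfl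
    simpa using this
  set ι2 : ℝ := ∫ s in (0:ℝ)..2, I s with hι2
  have hS2pos : 0 < S 2 := Spos h hS0pos 2 (by norm_num)
  set Sinf : ℝ := S 2 * Real.exp (-(12 * (ℓ - ι2))) with hSinf
  have hSinfpos : 0 < Sinf := by rw [hSinf]; positivity
  have hSeq : ∀ t ∈ Ici (2:ℝ), S t = S 2 * Real.exp (-(12 * ((∫ s in (0:ℝ)..t, I s) - ι2))) := by
    intro t ht
    have h0t : (0:ℝ) ≤ t := le_trans (by norm_num) ht
    have hsub := intervalIntegral.integral_interval_sub_left
      (contInt h.2.1 le_rfl h0t) (contInt h.2.1 le_rfl (by norm_num : (0:ℝ) ≤ 2))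
    rw [Srep2 h t ht, ← hsub]
  have hStend : Tendsto S atTop (𝓝 Sinf) := by
    have hcont : Continuous (fun z : ℝ => S 2 * Real.exp (-(12 * (z - ι2)))) := by
      fun_prop
    have hcomp : Tendsto (fun t => S 2 * Real.exp (-(12 * ((∫ s in (0:ℝ)..t, I s) - ι2))))
        atTop (𝓝 Sinf) := (hcont.tendsto ℓ).comp lli
    apply hcomp.congr'
    filter_upwards [eventually_ge_atTop (2:ℝ)] with t ht
    exact (hSeq t ht).symm
  have hSget : ∀ t ∈ Ici (2:ℝ), Sinf ≤ S t := by
    intro t ht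
    rw [hSeq t ht, hSinf]
    have hle : (∫ s in (0:ℝ)..t, I s) ≤ ℓ := hIle t (le_trans (by norm_num) ht)
    have := Real.exp_le_exp.mpr (by nlinarith : -(12 * (ℓ - ι2)) ≤ -(12 * ((∫ s in (0:ℝ)..t, I s) - ι2)))
    nlinarith [this, hS2pos]
  have hItend : Tendsto I atTop (𝓝 (S 0 + I 0 - ℓ - Sinf)) := by
    have hev : (fun t => (S 0 + I 0 - ∫ s in (0:ℝ)..t, I s) - S t) =ᶠ[atTop] I := by
      filter_upwards [eventually_ge_atTop (0:ℝ)] with t ht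
      have := conservation h t ht
      linarith
    exact Tendsto.congr' hev (((tendsto_const_nhds.sub lli)).sub hStend)
  have hJ : S 0 + I 0 - ℓ - Sinf = 0 := by
    have hJ0 : 0 ≤ S 0 + I 0 - ℓ - Sinf := by
      apply ge_of_tendsto hItend
      filter_upwards [eventually_ge_atTop (0:ℝ)] with t ht
      exact (Ipos h hI0pos t ht).le
    rcases eq_or_lt_of_le hJ0 with he | hlt
    · exact he.symm
    · exfalso
      set J := S 0 + I 0 - ℓ - Sinf with hJdef
      have hev2 : ∀ᶠ t in atTop, J/2 ≤ I t :=
        hItend.eventually (eventually_ge_nhds (by linarith : J/2 < J))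
      obtain ⟨t₀, ht₀⟩ := (hev2.and (eventually_ge_atTop (0:ℝ))).exists_forall_of_atTop
      have ht₀0 : (0:ℝ) ≤ t₀ := (ht₀ t₀ le_rfl).2
      set t₁ : ℝ := t₀ + 2 * (ℓ + 1) / J with ht₁def
      have ht01 : t₀ ≤ t₁ := le_add_of_nonneg_right (by positivity)
      have ht₁0 : (0:ℝ) ≤ t₁ := le_trans ht₀0 ht01
      have hsub := intervalIntegral.integral_interval_sub_left
        (contInt h.2.1 le_rfl ht₁0) (contInt h.2.1 le_rfl ht₀0)
      have hlow : (∫ s in t₀..t₁, (J/2 : ℝ)) ≤ ∫ s in t₀..t₁, I s := by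
        apply intervalIntegral.integral_mono_on ht01 intervalIntegrable_const
          (contInt h.2.1 ht₀0 ht₁0)
        intro s hs
        exact (ht₀ s hs.1).1
      have hconst : (∫ s in t₀..t₁, (J/2 : ℝ)) = ℓ + 1 := by
        rw [intervalIntegral.integral_const, smul_eq_mul, ht₁def]
        field_simp
        ring
      have h00 : 0 ≤ ∫ s in (0:ℝ)..t₀, I s := Iint_nonneg h hI0pos le_rfl ht₀0
      have := hIle t₁ ht₁0
      rw [hconst] at hlow
      linarith
  have hItend0 : Tendsto I atTop (𝓝 0) := by rwa [hJ] at hItend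
  have hLeq : L = 1 - Sinf := by
    have h2 : Tendsto (fun t => 1 - S t - I t) atTop (𝓝 (1 - Sinf - 0)) :=
      (tendsto_const_nhds.sub hStend).sub hItend0
    have := tendsto_nhds_unique hL h2
    linarith
  have hI2pos : 0 < I 2 := Ipos h hI0pos 2 (by norm_num)
  have hSinflt : Sinf < 1/12 := by
    by_contra hge
    push_neg at hge
    have hev3 : ∀ᶠ t in atTop, I 2 ≤ I t := by
      filter_upwards [eventually_ge_atTop (2:ℝ)] with t ht
      rw [Irep2 h t ht]
      have hnn : 0 ≤ ∫ s in (2:ℝ)..t, (12 * S s - 1) := by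
        apply intervalIntegral.integral_nonneg ht
        intro s hs
        have := hSget s hs.1
        linarith
      nlinarith [Real.one_le_exp hnn, hI2pos]
    have := ge_of_tendsto hItend0 hev3
    linarith
  have hfin : ∀ t ∈ Ici (2:ℝ), S t + I t - (1/12) * Real.log (S t)
      = S 2 + I 2 - (1/12) * Real.log (S 2) := by
    intro t ht
    have h0t : (0:ℝ) ≤ t := le_trans (by norm_num) ht
    have e1 := conservation h t h0t
    have e2 := conservation h 2 (by norm_num)
    have l2 := logS2 h hS0pos t ht
    have hsub := intervalIntegral.integral_interval_sub_left
      (contInt h.2.1 le_rfl h0t) (contInt h.2.1 le_rfl (by norm_num : (0:ℝ) ≤ 2))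
    rw [l2, ← hsub]
    linarith
  have ht1 : Tendsto (fun t => S t + I t - (1/12) * Real.log (S t)) atTop
      (𝓝 (Sinf + 0 - (1/12) * Real.log Sinf)) := by
    refine (hStend.add hItend0).sub (Tendsto.const_mul _ ?_)
    exact (Real.continuousAt_log (ne_of_gt hSinfpos)).tendsto.comp hStend
  have ht2 : Tendsto (fun t => S t + I t - (1/12) * Real.log (S t)) atTop
      (𝓝 (S 2 + I 2 - (1/12) * Real.log (S 2))) := by
    apply Tendsto.congr' _ tendsto_const_nhds
    filter_upwards [eventually_ge_atTop (2:ℝ)] with t ht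
    exact (hfin t ht).symm
  have hkey := tendsto_nhds_unique ht1 ht2
  have e2 := conservation h 2 (by norm_num)
  have l1 := logS1 h hS0pos 2 ⟨by norm_num, le_rfl⟩
  rw [hS0] at l1
  rw [hS0, hI0] at e2
  refine ⟨Sinf, hSinfpos, hSinflt, hLeq, ?_⟩
  rw [l1] at hkey
  linarith

lemma f_anti {x y : ℝ} (hx : 0 < x) (hxy : x ≤ y) (hy : y < 1/12) :
    y - (1/12) * Real.log y ≤ x - (1/12) * Real.log x := by
  have hy0 : 0 < y := lt_of_lt_of_le hx hxy
  have hlog := Real.log_le_sub_one_of_pos (show 0 < x / y by positivity)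
  rw [Real.log_div (ne_of_gt hx) (ne_of_gt hy0)] at hlog
  have hdiv : x / y - 1 = (x - y) / y := by field_simp
  rw [hdiv] at hlog
  have h2 : (y - x) / y ≥ 12 * (y - x) := by
    rw [ge_iff_le, le_div_iff₀ hy0]
    nlinarith
  have h3 : (x - y) / y = -((y - x) / y) := by ring
  rw [h3] at hlog
  nlinarith

lemma compare (S I Sd Id : ℝ → ℝ) (h1 : IsSIR B 1 S I) (h2 : IsSIR B 1 Sd Id)
    (hS0 : S 0 = 1/2) (hI0 : I 0 = 1/200) (hSd0 : Sd 0 = 1/2)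
    {δ : ℝ} (hδ0 : 0 < δ) (hδ1 : δ < 1/200) (hId0 : Id 0 = 1/200 - δ) :
    2 * δ ≤ (∫ s in (0:ℝ)..2, I s) - ∫ s in (0:ℝ)..2, Id s := by
  have hI0pos : 0 < I 0 := by rw [hI0]; norm_num
  have hId0pos : 0 < Id 0 := by rw [hId0]; linarith
  set F : ℝ → ℝ := fun t => (∫ s in (0:ℝ)..t, I s) - ∫ s in (0:ℝ)..t, Id s with hF
  set u : ℝ → ℝ := fun t => I t - Id t with hu
  -- key pointwise bound
  have keyA : ∀ t ∈ Icc (0:ℝ) 2, 0 ≤ F t → δ ≤ u t := by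
    intro t ht hFt
    have c1 := conservation h1 t ht.1
    have c2 := conservation h2 t ht.1
    have s1 := Srep1 h1 t ht
    have s2 := Srep1 h2 t ht
    have hsge := Sge h1 hS0 hI0pos (by rw [hI0]) t ht
    -- Sd t = S t * exp (4 * F t)
    have hSd : Sd t = S t * Real.exp (4 * F t) := by
      rw [s1, s2, hS0, hSd0, mul_assoc, ← Real.exp_add]
      congr 2
      simp only [hF]
      ring
    have hexp : 1 + 4 * F t ≤ Real.exp (4 * F t) := by
      have := Real.add_one_le_exp (4 * F t)
      linarith
    have hspos : 0 < S t := Spos h1 (by rw [hS0]; norm_num) t ht.1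
    have hbound : F t ≤ Sd t - S t := by
      rw [hSd]
      have hge0 : (0:ℝ) ≤ Real.exp (4 * F t) - 1 - 4 * F t + 4 * F t := by nlinarith
      nlinarith [hsge, hexp, hFt]
    -- u t = δ - F t + (Sd t - S t)
    have hut : u t = δ - F t + (Sd t - S t) := by
      simp only [hu, hF]
      rw [hS0, hI0] at c1
      rw [hSd0, hId0] at c2
      linarith
    linarith
  -- continuity facts
  have hFcont : ContinuousOn F (Icc 0 2) := by
    apply ContinuousOn.sub
    · exact primitive_continuousOn h1.2.1 le_rfl (by norm_num)
    · exact primitive_continuousOn h2.2.1 le_rfl (by norm_num)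
  have hucont : ContinuousOn u (Icc 0 2) := by
    apply ContinuousOn.sub
    · exact h1.2.1.mono (fun z hz => hz.1)
    · exact h2.2.1.mono (fun z hz => hz.1)
  -- continuity induction: F ≥ 0 on [0,2]
  have hmain : Icc (0:ℝ) 2 ⊆ {t | 0 ≤ F t} := by
    apply IsClosed.Icc_subset_of_forall_exists_gt
    · have : {t | 0 ≤ F t} ∩ Icc (0:ℝ) 2 = Icc (0:ℝ) 2 ∩ F ⁻¹' (Ici 0) := by
        ext z; simp [and_comm]
      rw [this]
      exact hFcont.preimage_isClosed_of_isClosed isClosed_Icc isClosed_Ici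
    · show (0:ℝ) ≤ F 0
      simp [hF]
    · intro x hx y hy
      have hx2 : x ∈ Icc (0:ℝ) 2 := ⟨hx.2.1, hx.2.2.le⟩
      have hux : δ ≤ u x := keyA x hx2 hx.1
      have hcwa : ContinuousWithinAt u (Icc 0 2) x := hucont x hx2
      have hev : ∀ᶠ z in 𝓝[Icc (0:ℝ) 2] x, 0 < u z :=
        hcwa.eventually (eventually_gt_nhds (lt_of_lt_of_le hδ0 hux))
      obtain ⟨η, hη, hball⟩ := Metric.mem_nhdsWithin_iff.mp hev
      set z : ℝ := min (x + η/2) (min y 2) with hz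
      have hxz : x < z := by
        apply lt_min (by linarith)
        exact lt_min hy (hx.2.2)
      have hz2 : z ≤ 2 := le_trans (min_le_right _ _) (min_le_right _ _)
      have hzy : z ≤ y := le_trans (min_le_right _ _) (min_le_left _ _)
      have hz0 : (0:ℝ) ≤ z := le_trans hx.2.1 hxz.le
      have hupos : ∀ s ∈ Icc x z, 0 < u s := by
        intro s hs
        apply hball
        constructor
        · rw [Metric.mem_ball, Real.dist_eq, abs_sub_lt_iff]
          constructor
          · have : z ≤ x + η/2 := min_le_left _ _
            linarith [hs.2]
          · linarith [hs.1, hη]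
        · exact ⟨le_trans hx.2.1 hs.1, le_trans hs.2 hz2⟩
      have hII : (∫ s in (0:ℝ)..z, I s) - (∫ s in (0:ℝ)..x, I s) = ∫ s in x..z, I s :=
        intervalIntegral.integral_interval_sub_left (contInt h1.2.1 le_rfl hz0)
          (contInt h1.2.1 le_rfl hx.2.1)
      have hII2 : (∫ s in (0:ℝ)..z, Id s) - (∫ s in (0:ℝ)..x, Id s) = ∫ s in x..z, Id s :=
        intervalIntegral.integral_interval_sub_left (contInt h2.2.1 le_rfl hz0)
          (contInt h2.2.1 le_rfl hx.2.1)
      have husub : (∫ s in x..z, I s) - (∫ s in x..z, Id s) = ∫ s in x..z, u s :=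
        (intervalIntegral.integral_sub (contInt h1.2.1 hx.2.1 hz0)
          (contInt h2.2.1 hx.2.1 hz0)).symm
      have hunn : 0 ≤ ∫ s in x..z, u s :=
        intervalIntegral.integral_nonneg hxz.le (fun s hs => (hupos s hs).le)
      refine ⟨z, ?_, hxz, hzy⟩
      show 0 ≤ F z
      have hx1 : 0 ≤ F x := hx.1
      have he : F z - F x = ∫ s in x..z, u s := by
        simp only [hF]
        linarith [hII, hII2, husub]
      linarith
  -- conclude
  have huge : ∀ t ∈ Icc (0:ℝ) 2, δ ≤ u t := fun t ht => keyA t ht (hmain ht)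
  have hiu : IntervalIntegrable u volume 0 2 := by
    have he : uIcc (0:ℝ) 2 = Icc 0 2 := uIcc_of_le (by norm_num)
    exact (he ▸ hucont).intervalIntegrable
  have hmono : (∫ s in (0:ℝ)..2, (δ:ℝ)) ≤ ∫ s in (0:ℝ)..2, u s :=
    intervalIntegral.integral_mono_on (by norm_num) intervalIntegrable_const hiu huge
  have hconst : (∫ s in (0:ℝ)..2, (δ:ℝ)) = 2 * δ := by
    rw [intervalIntegral.integral_const, smul_eq_mul]
    ring
  have hsplit : (∫ s in (0:ℝ)..2, u s)
      = (∫ s in (0:ℝ)..2, I s) - ∫ s in (0:ℝ)..2, Id s :=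
    intervalIntegral.integral_sub (contInt h1.2.1 le_rfl (by norm_num))
      (contInt h2.2.1 le_rfl (by norm_num))
  rw [hconst, hsplit] at hmono
  exact hmono

/-- order preservation can fail: there are constants
`0 < β_q < βₙ`, `γ, T > 0` and initial data `S₀, I₀ ∈ (0,1)`, `S₀ + I₀ ≤ 1`, such
that with `τ = [0, T]`, lowering the initial infected fraction to `I₀ - δ` yields
`R^δ(∞) > R(∞)` for all sufficiently small `δ > 0`, where `R = 1 - S - I`. -/
theorem order_preservation_can_fail :
    ∃ βq βn γ T S₀ I₀ : ℝ,
      0 < βq ∧ βq < βn ∧ 0 < γ ∧ 0 < T ∧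
      S₀ ∈ Ioo (0 : ℝ) 1 ∧ I₀ ∈ Ioo (0 : ℝ) 1 ∧ S₀ + I₀ ≤ 1 ∧
      ∀ S I : ℝ → ℝ, IsSIR (betaFun βq βn (Icc 0 T)) γ S I →
        S 0 = S₀ → I 0 = I₀ →
        ∀ L : ℝ, Tendsto (fun t => 1 - S t - I t) atTop (𝓝 L) →
        ∃ ε > (0 : ℝ), ∀ δ ∈ Ioo (0 : ℝ) ε,
          ∀ Sd Id : ℝ → ℝ, IsSIR (betaFun βq βn (Icc 0 T)) γ Sd Id →
            Sd 0 = S₀ → Id 0 = I₀ - δ →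
            ∀ Ld : ℝ, Tendsto (fun t => 1 - Sd t - Id t) atTop (𝓝 Ld) → L < Ld := by
  refine ⟨4, 12, 1, 2, 1/2, 1/200, by norm_num, by norm_num, by norm_num, by norm_num,
    ⟨by norm_num, by norm_num⟩, ⟨by norm_num, by norm_num⟩, by norm_num, ?_⟩
  intro S I hSIR hS0 hI0 L hL
  obtain ⟨Sinf, hSp, hSlt, hLeq, hfs⟩ :=
    per_solution S I hSIR hS0 (1/200) (by norm_num) le_rfl hI0 L hL
  refine ⟨1/200, by norm_num, ?_⟩
  intro δ hδ Sd Id hSIRd hSd0 hId0 Ld hLd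
  obtain ⟨Sinfd, hSdp, hSdlt, hLdeq, hfsd⟩ :=
    per_solution Sd Id hSIRd hSd0 (1/200 - δ) (by linarith [hδ.2]) (by linarith [hδ.1])
      hId0 Ld hLd
  have hcomp := compare S I Sd Id hSIR hSIRd hS0 hI0 hSd0 hδ.1 hδ.2 hId0
  have hgt : Sinf - (1/12) * Real.log Sinf + δ/3 ≤ Sinfd - (1/12) * Real.log Sinfd := by
    rw [hfs, hfsd]
    linarith
  have hlt : Sinfd < Sinf := by
    by_contra hcon
    push_neg at hcon
    have := f_anti hSp hcon hSdlt
    linarith [hδ.1]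
  rw [hLeq, hLdeq]
  linarith
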